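/- arXiv:1709.08696 — 3 statements merged into one kernel-verified Lean document; each statement's English description precedes it below -/
import Mathlib

section
/- Let G be a context-free grammar over a partially ordered terminal alphabet Σ, A a bireachable nonterminal of G, and w ∈ Σ* such that R_{A,w}(G) is not a chain. Then 𝓛(G) has exponential antichain growth. -/
open Filter
open scoped ENNReal

/-- The lexicographic partial order on words induced by a strict order `r` on letters:
`ε R w` for all `w`, and `(x :: w) R (y :: w')` iff `r x y`, or `x = y` and `w R w'`. -/
inductive LexR {α : Type*} (r : α → α → Prop) : List α → List α → Prop
  | nil (w : List α) : LexR r [] w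
  | head {x y : α} (w w' : List α) (h : r x y) : LexR r (x :: w) (y :: w')
  | cons (x : α) {w w' : List α} (h : LexR r w w') : LexR r (x :: w) (x :: w')

/-- Two words are comparable (`u ∼ v`) if `u R v` or `v R u`. -/
def LexComp {α : Type*} (r : α → α → Prop) (u v : List α) : Prop :=
  LexR r u v ∨ LexR r v u

/-- A language is an antichain if any two distinct words of it are incomparable. -/
def IsAntichainLang {α : Type*} (r : α → α → Prop) (L : Set (List α)) : Prop :=
  ∀ u ∈ L, ∀ v ∈ L, u ≠ v → ¬ LexComp r u v

/-- A language is a quasiantichain if any two words of it are incomparable or one is a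
prefix of the other. -/
def IsQuasiantichainLang {α : Type*} (r : α → α → Prop) (L : Set (List α)) : Prop :=
  ∀ u ∈ L, ∀ v ∈ L, u <+: v ∨ v <+: u ∨ ¬ LexComp r u v

/-- A language is a chain if any two words of it are comparable. -/
def IsChainLang {α : Type*} (r : α → α → Prop) (L : Set (List α)) : Prop :=
  ∀ u ∈ L, ∀ v ∈ L, LexComp r u v

/-- `|L|_{=n}`: the number of words of length `n` in `L`. -/
noncomputable def countLen {α : Type*} (L : Set (List α)) (n : ℕ) : ℕ :=
  {w ∈ L | w.length = n}.ncard

/-- `L` has exponential growth of order `ε` if `limsup |L|_{=n} / 2^(εn) > 0`. -/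
def ExpGrowthOrder {α : Type*} (L : Set (List α)) (ε : ℝ) : Prop :=
  0 < Filter.limsup (fun n : ℕ => (countLen L n : ℝ≥0∞) / (2 : ℝ≥0∞) ^ (ε * n)) Filter.atTop

/-- `L` has exponential growth if it has exponential growth of some order `ε > 0`. -/
def ExpGrowth {α : Type*} (L : Set (List α)) : Prop :=
  ∃ ε : ℝ, 0 < ε ∧ ExpGrowthOrder L ε

/-- `L` has polynomial growth if `limsup |L|_{=n} / n^k < ∞` for some `k`. -/
def PolyGrowth {α : Type*} (L : Set (List α)) : Prop :=
  ∃ k : ℕ, Filter.limsup (fun n : ℕ => (countLen L n : ℝ≥0∞) / (n : ℝ≥0∞) ^ k) Filter.atTop < ⊤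

/-- `L` is an antichain family if the set of words of length `n` in `L` is an antichain
for every `n`. -/
def AntichainFamily {α : Type*} (r : α → α → Prop) (L : Set (List α)) : Prop :=
  ∀ n : ℕ, IsAntichainLang r {w ∈ L | w.length = n}

/-- `L` has exponential antichain growth if some subset of `L` is an antichain family
with exponential growth. -/
def ExpAntichainGrowth {α : Type*} (r : α → α → Prop) (L : Set (List α)) : Prop :=
  ∃ L' ⊆ L, AntichainFamily r L' ∧ ExpGrowth L'

/-- `L` has polynomial antichain growth if every antichain family contained in `L`
has polynomial growth. -/
def PolyAntichainGrowth {α : Type*} (r : α → α → Prop) (L : Set (List α)) : Prop :=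
  ∀ L' ⊆ L, AntichainFamily r L' → PolyGrowth L'

/-- The Kleene star of a language: all finite concatenations of words of `L`. -/
def KStarLang {α : Type*} (L : Set (List α)) : Set (List α) :=
  {w | ∃ S : List (List α), (∀ u ∈ S, u ∈ L) ∧ w = S.flatten}

/-- `L_A(G) = {w | A ⇒* wAu for some u}`. -/
def cfgL {T : Type} (G : ContextFreeGrammar T) (A : G.NT) : Set (List T) :=
  {w | ∃ u : List T, G.Derives [Symbol.nonterminal A]
    (w.map Symbol.terminal ++ [Symbol.nonterminal A] ++ u.map Symbol.terminal)}

/-- `R_{A,w}(G) = {u | A ⇒* wAu}`. -/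
def cfgR {T : Type} (G : ContextFreeGrammar T) (A : G.NT) (w : List T) : Set (List T) :=
  {u | G.Derives [Symbol.nonterminal A]
    (w.map Symbol.terminal ++ [Symbol.nonterminal A] ++ u.map Symbol.terminal)}

/-- A nonterminal `A` is bireachable if `S ⇒* uAu'` for some terminal words `u, u'` and
`A ⇒* v` for some terminal word `v`. -/
def CfgBireachable {T : Type} (G : ContextFreeGrammar T) (A : G.NT) : Prop :=
  (∃ u u' : List T, G.Derives [Symbol.nonterminal G.initial]
    (u.map Symbol.terminal ++ [Symbol.nonterminal A] ++ u'.map Symbol.terminal)) ∧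
  (∃ v : List T, G.Derives [Symbol.nonterminal A] (v.map Symbol.terminal))


section AuxLemmas

variable {α : Type*}

lemma myLexR_refl (r : α → α → Prop) (u : List α) : LexR r u u := by
  induction u with
  | nil => exact LexR.nil []
  | cons x t ih => exact LexR.cons x ih

variable [PartialOrder α]

lemma my_not_lexR {a b : α} (hab : ¬ a < b) (hne : a ≠ b) :
    ∀ (q x y : List α), ¬ LexR (· < ·) (q ++ a :: x) (q ++ b :: y) := by
  intro q
  induction q with
  | nil =>
    intro x y h
    cases h with
    | head _ _ h => exact hab h
    | cons _ _ => exact hne rfl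
  | cons c q ih =>
    intro x y h
    cases h with
    | head _ _ h => exact lt_irrefl c h
    | cons _ h => exact ih x y h

lemma my_not_lexComp {a b : α} (h1 : ¬ a < b) (h2 : ¬ b < a) (hne : a ≠ b)
    (q x y : List α) : ¬ LexComp (· < ·) (q ++ a :: x) (q ++ b :: y) := by
  rintro (h | h)
  · exact my_not_lexR h1 hne q x y h
  · exact my_not_lexR h2 (Ne.symm hne) q y x h

lemma my_exists_decomp {u v : List α} (h : ¬ LexComp (· < ·) u v) :
    ∃ (p x y : List α) (a b : α), u = p ++ a :: x ∧ v = p ++ b :: y ∧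
      ¬ a < b ∧ ¬ b < a ∧ a ≠ b := by
  induction u generalizing v with
  | nil => exact absurd (Or.inl (LexR.nil v)) h
  | cons c u' ih =>
    cases v with
    | nil => exact absurd (Or.inr (LexR.nil _)) h
    | cons d v' =>
      by_cases hcd : c = d
      · subst hcd
        have h' : ¬ LexComp (· < ·) u' v' := by
          rintro (hh | hh)
          · exact h (Or.inl (LexR.cons c hh))
          · exact h (Or.inr (LexR.cons c hh))
        obtain ⟨p, x, y, a, b, hu, hv, g1, g2, g3⟩ := ih h'
        exact ⟨c :: p, x, y, a, b, by simp [hu], by simp [hv], g1, g2, g3⟩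
      · by_cases g1 : c < d
        · exact absurd (Or.inl (LexR.head _ _ g1)) h
        by_cases g2 : d < c
        · exact absurd (Or.inr (LexR.head _ _ g2)) h
        exact ⟨[], u', v', c, d, rfl, rfl, g1, g2, hcd⟩

lemma my_blocks_incomp {a b : α} (h1 : ¬ a < b) (h2 : ¬ b < a) (hne : a ≠ b)
    (block : Bool → List α) {p x₁ x₂ : List α}
    (ht : block true = p ++ a :: x₁) (hf : block false = p ++ b :: x₂) :
    ∀ (σ τ : List Bool), σ.length = τ.length → σ ≠ τ → ∀ (C t₁ t₂ : List α),
      ¬ LexComp (· < ·) (C ++ (σ.map block).flatten ++ t₁)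
        (C ++ (τ.map block).flatten ++ t₂) := by
  intro σ
  induction σ with
  | nil =>
    intro τ hlen hne'
    cases τ with
    | nil => exact absurd rfl hne'
    | cons _ _ => simp at hlen
  | cons i σ' ih =>
    intro τ hlen hτne C t₁ t₂
    cases τ with
    | nil => simp at hlen
    | cons j τ' =>
      by_cases hij : i = j
      · subst hij
        have hne2 : σ' ≠ τ' := by
          intro hh; exact hτne (by rw [hh])
        have := ih τ' (by simpa using hlen) hne2 (C ++ block i) t₁ t₂
        simpa [List.append_assoc] using this
      · cases i <;> cases j <;> try (exact absurd rfl hij)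
        · -- i = false, j = true
          have := my_not_lexComp h2 h1 (Ne.symm hne) (C ++ p)
            (x₂ ++ (σ'.map block).flatten ++ t₁) (x₁ ++ (τ'.map block).flatten ++ t₂)
          simpa [ht, hf, List.append_assoc] using this
        · -- i = true, j = false
          have := my_not_lexComp h1 h2 hne (C ++ p)
            (x₁ ++ (σ'.map block).flatten ++ t₁) (x₂ ++ (τ'.map block).flatten ++ t₂)
          simpa [ht, hf, List.append_assoc] using this

end AuxLemmas

lemma my_growth {β : Type*} [Fintype β] [PartialOrder β]
    (L : Set (List β)) (word : List Bool → List β) (c d : ℕ) (hd : 1 ≤ d)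
    (hmem : ∀ σ, word σ ∈ L)
    (hlen : ∀ σ, (word σ).length = c + σ.length * d)
    (hinc : ∀ σ τ : List Bool, σ.length = τ.length → σ ≠ τ →
      ¬ LexComp (· < ·) (word σ) (word τ)) :
    ExpAntichainGrowth (· < ·) L := by
  classical
  have hinj : ∀ σ τ : List Bool, σ.length = τ.length → word σ = word τ → σ = τ := by
    intro σ τ hl he
    by_contra hne
    exact hinc σ τ hl hne (he ▸ Or.inl (myLexR_refl _ _))
  refine ⟨Set.range word, by rintro _ ⟨σ, rfl⟩; exact hmem σ, ?_, ?_⟩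
  · -- antichain family
    intro n u hu v hv huv
    obtain ⟨⟨σ, rfl⟩, hσ⟩ := hu
    obtain ⟨⟨τ, rfl⟩, hτ⟩ := hv
    have e1 : c + σ.length * d = n := (hlen σ).symm.trans hσ
    have e2 : c + τ.length * d = n := (hlen τ).symm.trans hτ
    have hl : σ.length = τ.length :=
      Nat.eq_of_mul_eq_mul_right (by omega)
        (Nat.add_left_cancel (e1.trans e2.symm))
    exact hinc σ τ hl (fun h => huv (by rw [h]))
  · -- exponential growth
    have key : ∀ n : ℕ, (2:ℝ≥0∞)^n ≤ (countLen (Set.range word) (c + n * d) : ℝ≥0∞) := by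
      intro n
      set S := {w ∈ Set.range word | w.length = c + n * d} with hS
      have hfin : S.Finite := (List.finite_length_eq β (c + n*d)).subset (fun w hw => hw.2)
      set F : Finset (List β) := (Finset.univ : Finset (Fin n → Bool)).image
        (fun f => word (List.ofFn f)) with hF
      have hsub : ↑F ⊆ S := by
        intro wd hwd
        simp only [hF, Finset.coe_image, Set.mem_image, Finset.coe_univ, Set.image_univ,
          Set.mem_range] at hwd
        obtain ⟨f, rfl⟩ := hwd
        refine ⟨⟨_, rfl⟩, ?_⟩
        rw [hlen]
        simp
      have hcard : F.card = 2 ^ n := by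
        rw [hF, Finset.card_image_of_injective _ ?inj]
        · simp
        case inj =>
          intro f g hfg
          exact List.ofFn_injective (hinj (List.ofFn f) (List.ofFn g) (by simp) hfg)
      have : (2:ℕ)^n ≤ S.ncard := by
        calc (2:ℕ)^n = F.card := hcard.symm
        _ = (↑F : Set (List β)).ncard := (Set.ncard_coe_finset F).symm
        _ ≤ S.ncard := Set.ncard_le_ncard hsub hfin
      have hcl : countLen (Set.range word) (c + n * d) = S.ncard := rfl
      rw [hcl]
      exact_mod_cast this
    refine ⟨1 / (d:ℝ), by positivity, ?_⟩
    have hd' : (1:ℝ) ≤ (d:ℝ) := by exact_mod_cast hd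
    refine lt_of_lt_of_le ?_ (le_limsup_of_frequently_le'
      (x := ((2:ℝ≥0∞)^c)⁻¹) ?_)
    · exact ENNReal.inv_pos.2 (ENNReal.pow_ne_top (by simp))
    · rw [frequently_atTop]
      intro N
      refine ⟨c + N * d, ?_, ?_⟩
      · have : N ≤ N * d := Nat.le_mul_of_pos_right _ (by omega)
        omega
      · -- main bound
        have hexp : (1 / (d:ℝ)) * ((c + N * d : ℕ) : ℝ) ≤ ((N + c : ℕ) : ℝ) := by
          push_cast
          rw [div_mul_eq_mul_div, div_le_iff₀ (by positivity)]
          nlinarith [Nat.cast_nonneg (α := ℝ) c, Nat.cast_nonneg (α := ℝ) N]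
        have h2 : (2:ℝ≥0∞) ^ ((1 / (d:ℝ)) * ((c + N * d : ℕ) : ℝ)) ≤ (2:ℝ≥0∞) ^ (N + c) := by
          calc (2:ℝ≥0∞) ^ ((1 / (d:ℝ)) * ((c + N * d : ℕ) : ℝ))
              ≤ (2:ℝ≥0∞) ^ (((N + c : ℕ) : ℝ)) :=
            ENNReal.rpow_le_rpow_of_exponent_le one_le_two hexp
          _ = (2:ℝ≥0∞) ^ (N + c) := by rw [← ENNReal.rpow_natCast]
        have h3 : (2:ℝ≥0∞)^N / (2:ℝ≥0∞)^(N + c) ≤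
            (countLen (Set.range word) (c + N * d) : ℝ≥0∞) /
              (2:ℝ≥0∞) ^ ((1 / (d:ℝ)) * ((c + N * d : ℕ) : ℝ)) :=
          ENNReal.div_le_div (key N) h2
        have h4 : (2:ℝ≥0∞)^N / (2:ℝ≥0∞)^(N + c) = ((2:ℝ≥0∞)^c)⁻¹ := by
          rw [pow_add]
          rw [show (2:ℝ≥0∞)^N = (2:ℝ≥0∞)^N * 1 by rw [mul_one]]
          rw [show ((2:ℝ≥0∞)^N * 1) * (2:ℝ≥0∞)^c = (2:ℝ≥0∞)^N * ((1:ℝ≥0∞) * 2^c) by ring]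
          rw [ENNReal.mul_div_mul_left _ _ (by positivity) (ENNReal.pow_ne_top (by simp))]
          rw [one_mul, one_div]
        rw [← h4]
        exact h3

lemma my_derives_subst {T : Type} {G : ContextFreeGrammar T} {A : G.NT}
    {x : List (Symbol T G.NT)} (h : G.Derives [Symbol.nonterminal A] x)
    (l r : List (Symbol T G.NT)) :
    G.Derives (l ++ [Symbol.nonterminal A] ++ r) (l ++ x ++ r) := by
  simpa [List.append_assoc] using
    (ContextFreeGrammar.Derives.append_left
      (ContextFreeGrammar.Derives.append_right h r) l)

lemma my_derives_iter {T : Type} {G : ContextFreeGrammar T} {A : G.NT}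
    (W : List T) (block : Bool → List T)
    (hb : ∀ i, G.Derives [Symbol.nonterminal A]
      (W.map Symbol.terminal ++ [Symbol.nonterminal A] ++
        (block i).map Symbol.terminal)) :
    ∀ σ : List Bool, G.Derives [Symbol.nonterminal A]
      (((List.replicate σ.length W).flatten).map Symbol.terminal ++
        [Symbol.nonterminal A] ++ ((σ.map block).flatten).map Symbol.terminal) := by
  intro σ
  induction σ with
  | nil => simpa using ContextFreeGrammar.Derives.refl _
  | cons i σ' ih =>
    refine ih.trans ?_
    have h := my_derives_subst (hb i)
      (((List.replicate σ'.length W).flatten).map Symbol.terminal)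
      (((σ'.map block).flatten).map Symbol.terminal)
    simpa [List.replicate_succ', List.append_assoc] using h

lemma my_full_mem {T : Type} {G : ContextFreeGrammar T} {A : G.NT}
    {s s' v : List T}
    (hS : G.Derives [Symbol.nonterminal G.initial]
      (s.map Symbol.terminal ++ [Symbol.nonterminal A] ++ s'.map Symbol.terminal))
    (hv : G.Derives [Symbol.nonterminal A] (v.map Symbol.terminal))
    {mid rest : List T}
    (hmid : G.Derives [Symbol.nonterminal A]
      (mid.map Symbol.terminal ++ [Symbol.nonterminal A] ++ rest.map Symbol.terminal)) :
    (s ++ mid ++ v ++ rest ++ s') ∈ G.language := by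
  rw [ContextFreeGrammar.mem_language_iff]
  refine hS.trans ?_
  have d2 := my_derives_subst hmid (s.map Symbol.terminal) (s'.map Symbol.terminal)
  have d3 := my_derives_subst hv
    (s.map Symbol.terminal ++ mid.map Symbol.terminal)
    (rest.map Symbol.terminal ++ s'.map Symbol.terminal)
  have d3' : G.Derives
      (s.map Symbol.terminal ++ (mid.map Symbol.terminal ++ [Symbol.nonterminal A] ++
        rest.map Symbol.terminal) ++ s'.map Symbol.terminal)
      ((s ++ mid ++ v ++ rest ++ s').map Symbol.terminal) := by
    have e1 : s.map Symbol.terminal ++ (mid.map Symbol.terminal ++ [Symbol.nonterminal A] ++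
        rest.map Symbol.terminal) ++ s'.map (Symbol.terminal (N := G.NT))
        = (s.map Symbol.terminal ++ mid.map Symbol.terminal) ++ [Symbol.nonterminal A] ++
          (rest.map Symbol.terminal ++ s'.map Symbol.terminal) := by
      simp [List.append_assoc]
    rw [e1]
    have e2 : (s.map Symbol.terminal ++ mid.map Symbol.terminal) ++
        v.map (Symbol.terminal (N := G.NT)) ++
        (rest.map Symbol.terminal ++ s'.map Symbol.terminal)
        = (s ++ mid ++ v ++ rest ++ s').map Symbol.terminal := by
      simp [List.append_assoc]
    rw [← e2]
    exact d3
  exact d2.trans d3'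

/-- If `R_{A,w}(G)` is not a chain for some bireachable nonterminal `A` and some word `w`,
then `L(G)` has exponential antichain growth. -/
theorem cfg_RAw_not_chain_exp_growth {T : Type} [Fintype T] [PartialOrder T]
    (G : ContextFreeGrammar T) (A : G.NT) (w : List T) (hbi : CfgBireachable G A)
    (hnc : ¬ IsChainLang (· < ·) (cfgR G A w)) :
    ExpAntichainGrowth (· < ·) (G.language : Set (List T)) :=  by
  classical
  rw [IsChainLang] at hnc
  push_neg at hnc
  obtain ⟨u₁, hu₁, u₂, hu₂, hcomp⟩ := hnc
  have h₁ : G.Derives [Symbol.nonterminal A]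
      (w.map Symbol.terminal ++ [Symbol.nonterminal A] ++ u₁.map Symbol.terminal) := hu₁
  have h₂ : G.Derives [Symbol.nonterminal A]
      (w.map Symbol.terminal ++ [Symbol.nonterminal A] ++ u₂.map Symbol.terminal) := hu₂
  obtain ⟨⟨s, s', hS⟩, ⟨v, hv⟩⟩ := hbi
  obtain ⟨p, x, y, a, b, e₁, e₂, g1, g2, g3⟩ := my_exists_decomp hcomp
  set block : Bool → List T := fun i => if i then u₁ ++ u₂ else u₂ ++ u₁ with hblock
  have hb : ∀ i, G.Derives [Symbol.nonterminal A]
      ((w ++ w).map Symbol.terminal ++ [Symbol.nonterminal A] ++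
        (block i).map Symbol.terminal) := by
    intro i
    cases i
    · have := h₁.trans (my_derives_subst h₂ (w.map Symbol.terminal) (u₁.map Symbol.terminal))
      simpa [hblock, List.append_assoc] using this
    · have := h₂.trans (my_derives_subst h₁ (w.map Symbol.terminal) (u₂.map Symbol.terminal))
      simpa [hblock, List.append_assoc] using this
  have hder := my_derives_iter (w ++ w) block hb
  have ht : block true = p ++ a :: (x ++ u₂) := by simp [hblock, e₁]
  have hf : block false = p ++ b :: (y ++ u₁) := by simp [hblock, e₂]
  have hrep : ∀ n : ℕ,
      ((List.replicate n (w ++ w)).flatten).length = n * (w.length + w.length) := by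
    intro n
    induction n with
    | zero => simp
    | succ n ih =>
      rw [List.replicate_succ]
      simp [ih]
      ring
  have hblen : ∀ σ : List Bool, ((σ.map block).flatten).length
      = σ.length * (u₁.length + u₂.length) := by
    intro σ
    induction σ with
    | nil => simp
    | cons i σ' ih =>
      rw [List.map_cons, List.flatten_cons, List.length_append, ih]
      cases i <;> simp [hblock] <;> ring
  refine my_growth G.language
    (fun σ => s ++ (List.replicate σ.length (w ++ w)).flatten ++ v ++
      (σ.map block).flatten ++ s')
    (s.length + v.length + s'.length)
    ((w.length + w.length) + (u₁.length + u₂.length)) ?_ ?_ ?_ ?_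
  · have : 1 ≤ u₁.length := by
      rw [e₁]; simp only [List.length_append, List.length_cons]; omega
    omega
  · intro σ
    exact my_full_mem hS hv (hder σ)
  · intro σ
    simp only [List.length_append, hrep, hblen]
    ring
  · intro σ τ hl hτ
    rw [← hl]
    have := my_blocks_incomp g1 g2 g3 block ht hf σ τ hl hτ
      (s ++ (List.replicate σ.length (w ++ w)).flatten ++ v) s' s'
    simpa [List.append_assoc] using this
end

section
/- Let Σ be a finite alphabet with a linear order, and let Σ̃ = Σ ∪ {0, 1} (with 0, 1 two fresh letters) be partially ordered by extending the order on Σ so that σ < 0 and σ < 1 for all σ ∈ Σ, and 0 and 1 are incomparable. Then for any languages L1, L2 ⊆ Σ*, the language L1·{0} ∪ L2·{1} ⊆ Σ̃* is a chain (with respect to the lexicographic order induced on Σ̃*) if and only if L1 ∩ L2 = ∅. -/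
open Filter
open scoped ENNReal

/-- The order on `Σ ∪ {0, 1}`, where `Σ` carries its linear order, both fresh letters
(`Sum.inr false` playing `0` and `Sum.inr true` playing `1`) lie above every letter of
`Σ`, and the two fresh letters are incomparable. -/
def extRel01 {Sigma : Type*} [LinearOrder Sigma] : Sigma ⊕ Bool → Sigma ⊕ Bool → Prop :=
  fun x y =>
    match x, y with
    | Sum.inl a, Sum.inl b => a < b
    | Sum.inl _, Sum.inr _ => True
    | _, _ => False

lemma lexR_refl {α : Type*} (r : α → α → Prop) : ∀ w : List α, LexR r w w
  | [] => .nil []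
  | x :: w => .cons x (lexR_refl r w)

lemma lexR_cons_cases {α : Type*} {r : α → α → Prop} {x y : α} {w w' : List α}
    (h : LexR r (x :: w) (y :: w')) : r x y ∨ (x = y ∧ LexR r w w') := by
  cases h with
  | head _ _ h => exact Or.inl h
  | cons _ h => exact Or.inr ⟨rfl, h⟩

lemma extRel01_irrefl {Sigma : Type*} [LinearOrder Sigma] (x : Sigma ⊕ Bool) :
    ¬ extRel01 x x := by
  cases x <;> simp [extRel01]

lemma not_lexR_append {Sigma : Type*} [LinearOrder Sigma] (w : List (Sigma ⊕ Bool))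
    {b1 b2 : Bool} (h : b1 ≠ b2) :
    ¬ LexR extRel01 (w ++ [Sum.inr b1]) (w ++ [Sum.inr b2]) := by
  induction w with
  | nil =>
    intro hl
    rcases lexR_cons_cases hl with h' | ⟨he, _⟩
    · simp [extRel01] at h'
    · exact h (Sum.inr.inj he)
  | cons x w ih =>
    intro hl
    rcases lexR_cons_cases hl with h' | ⟨_, h'⟩
    · exact extRel01_irrefl x h'
    · exact ih h'

lemma lexComp_append {Sigma : Type*} [LinearOrder Sigma] (u : List Sigma) :
    ∀ (v : List Sigma) (b1 b2 : Bool), (u = v → b1 = b2) →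
    LexComp extRel01 (u.map Sum.inl ++ [Sum.inr b1]) (v.map Sum.inl ++ [Sum.inr b2]) := by
  induction u with
  | nil =>
    intro v b1 b2 h
    cases v with
    | nil => rw [h rfl]; exact Or.inl (lexR_refl _ _)
    | cons c v' => exact Or.inr (LexR.head _ _ trivial)
  | cons a u' ih =>
    intro v b1 b2 h
    cases v with
    | nil => exact Or.inl (LexR.head _ _ trivial)
    | cons c v' =>
      rcases lt_trichotomy a c with hl | he | hg
      · exact Or.inl (LexR.head _ _ hl)
      · subst he
        rcases ih v' b1 b2 (fun hv => h (by rw [hv])) with h' | h'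
        · exact Or.inl (LexR.cons _ h')
        · exact Or.inr (LexR.cons _ h')
      · exact Or.inr (LexR.head _ _ hg)

/-- `L1·{0} ∪ L2·{1}` is a chain iff `L1 ∩ L2 = ∅`. -/
theorem chain_iff_intersection_empty {Sigma : Type*} [Fintype Sigma] [LinearOrder Sigma]
    (L1 L2 : Set (List Sigma)) :
    IsChainLang extRel01
      ({w | ∃ l ∈ L1, w = l.map Sum.inl ++ [Sum.inr false]} ∪
       {w | ∃ l ∈ L2, w = l.map Sum.inl ++ [Sum.inr true]}) ↔
    L1 ∩ L2 = ∅ := by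
  constructor
  · intro h
    rw [Set.eq_empty_iff_forall_notMem]
    rintro x ⟨hx1, hx2⟩
    have hc := h _ (Or.inl ⟨x, hx1, rfl⟩) _ (Or.inr ⟨x, hx2, rfl⟩)
    rcases hc with h' | h'
    · exact not_lexR_append _ (by simp) h'
    · exact not_lexR_append _ (by simp) h'
  · intro h u hu v hv
    rcases hu with ⟨l1, hl1, rfl⟩ | ⟨l1, hl1, rfl⟩ <;>
      rcases hv with ⟨l2, hl2, rfl⟩ | ⟨l2, hl2, rfl⟩
    · exact lexComp_append _ _ _ _ (fun _ => rfl)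
    · refine lexComp_append _ _ _ _ (fun he => ?_)
      subst he
      exact absurd (Set.mem_inter hl1 hl2) (by rw [h]; exact Set.notMem_empty _)
    · refine lexComp_append _ _ _ _ (fun he => ?_)
      subst he
      exact absurd (Set.mem_inter hl2 hl1) (by rw [h]; exact Set.notMem_empty _)
    · exact lexComp_append _ _ _ _ (fun _ => rfl)
end

section
/- Let L ⊆ Σ* be a prefix-free chain (that is, a chain in which no word is a proper prefix of another word of L). Then the Kleene star L* is a chain. -/
open Filter
open scoped ENNReal

lemma lexR_append_left {α : Type*} (r : α → α → Prop) (u : List α) {w w' : List α}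
    (h : LexR r w w') : LexR r (u ++ w) (u ++ w') := by
  induction u with
  | nil => exact h
  | cons x u ih => exact .cons x ih

lemma lexR_append_of_not_prefix {α : Type*} {r : α → α → Prop} {u v : List α}
    (h : LexR r u v) (hnp : ¬ u <+: v) (w w' : List α) :
    LexR r (u ++ w) (v ++ w') := by
  induction h with
  | nil w'' => exact absurd (List.nil_prefix) hnp
  | head w1 w2 hr => exact .head _ _ hr
  | cons x h ih =>
    refine .cons x (ih ?_)
    intro hp
    exact hnp (List.cons_prefix_cons.mpr ⟨rfl, hp⟩)

lemma key_flatten {Sigma : Type*} [PartialOrder Sigma]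
    (L : Set (List Sigma)) (hchain : IsChainLang (· < ·) L)
    (hpf : ∀ u ∈ L, ∀ v ∈ L, u <+: v → u = v) :
    ∀ S T : List (List Sigma), (∀ u ∈ S, u ∈ L) → (∀ u ∈ T, u ∈ L) →
      LexComp (· < ·) S.flatten T.flatten := by
  intro S
  induction S with
  | nil => intro T _ _; exact Or.inl (.nil _)
  | cons u S ih =>
    intro T hS hT
    cases T with
    | nil => exact Or.inr (.nil _)
    | cons v T =>
      have hu : u ∈ L := hS u (by simp)
      have hv : v ∈ L := hT v (by simp)
      by_cases huv : u = v
      · subst huv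
        have := ih T (fun x hx => hS x (by simp [hx])) (fun x hx => hT x (by simp [hx]))
        simp only [List.flatten_cons]
        rcases this with h | h
        · exact Or.inl (lexR_append_left _ u h)
        · exact Or.inr (lexR_append_left _ u h)
      · rcases hchain u hu v hv with h | h
        · have hnp : ¬ u <+: v := fun hp => huv (hpf u hu v hv hp)
          simp only [List.flatten_cons]
          exact Or.inl (lexR_append_of_not_prefix h hnp _ _)
        · have hnp : ¬ v <+: u := fun hp => huv (hpf v hv u hu hp).symm
          simp only [List.flatten_cons]
          exact Or.inr (lexR_append_of_not_prefix h hnp _ _)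

/-- The Kleene star of a prefix-free chain is a chain. -/
theorem prefix_free_chain_kstar {Sigma : Type*} [Fintype Sigma] [PartialOrder Sigma]
    (L : Set (List Sigma)) (hchain : IsChainLang (· < ·) L)
    (hpf : ∀ u ∈ L, ∀ v ∈ L, u <+: v → u = v) :
    IsChainLang (· < ·) (KStarLang L) := by
  rintro w ⟨S, hS, rfl⟩ w' ⟨T, hT, rfl⟩
  exact key_flatten L hchain hpf S T hS hT
end
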